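/- Let (Ω, 𝒜, μ) be a finite measure space and φ a Young function satisfying the Δ₂-condition. If a sequence of σ-subalgebras {𝒜ₙ} μ-converges to a σ-subalgebra 𝔇 (i.e., for every D ∈ 𝔇 there exist Aₙ ∈ 𝒜ₙ with μ(Aₙ Δ D) → 0), then for every f ∈ L^φ(Ω, 𝔇, μ), E(f | 𝒜ₙ) → f in L^φ norm. -/

import Mathlib

open MeasureTheory Filter Topology
open scoped ENNReal NNReal

def IsYoung (φ : ℝ → ℝ) : Prop :=
  ConvexOn ℝ Set.univ φ ∧ Continuous φ ∧ (∀ x, φ (-x) = φ x) ∧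
    (∀ x, φ x = 0 ↔ x = 0) ∧ Tendsto (fun x => φ x / x) atTop atTop

/-- The Δ₂ condition. -/
def Delta2 (φ : ℝ → ℝ) : Prop := ∃ k > 0, ∃ x₀ > 0, ∀ x ≥ x₀, φ (2 * x) ≤ k * φ x

noncomputable def luxNorm {Ω : Type*} {m : MeasurableSpace Ω} (μ : Measure Ω)
    (φ : ℝ → ℝ) (f : Ω → ℝ) : ℝ :=
  sInf {k : ℝ | 0 < k ∧ ∫ x, φ (|f x| / k) ∂μ ≤ 1}

section Young
variable {φ : ℝ → ℝ}

lemma young_zero (hφ : IsYoung φ) : φ 0 = 0 := (hφ.2.2.2.1 0).2 rfl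

lemma young_nonneg (hφ : IsYoung φ) (x : ℝ) : 0 ≤ φ x := by
  have h := hφ.1.2 (Set.mem_univ (-x)) (Set.mem_univ x) (by norm_num : (0:ℝ) ≤ 1/2)
    (by norm_num : (0:ℝ) ≤ 1/2) (by norm_num)
  simp only [smul_eq_mul] at h
  have : (1/2 : ℝ) * (-x) + (1/2) * x = 0 := by ring
  rw [this, young_zero hφ, hφ.2.2.1 x] at h
  linarith

lemma young_mono (hφ : IsYoung φ) {a b : ℝ} (ha : 0 ≤ a) (hab : a ≤ b) : φ a ≤ φ b := by
  rcases eq_or_lt_of_le (ha.trans hab) with hb | hb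
  · have h1 : a = 0 := le_antisymm (hab.trans hb.symm.le) ha
    rw [h1, ← hb]
  · set t := (b - a) / (2 * b) with ht
    have htnn : 0 ≤ t := div_nonneg (by linarith) (by linarith)
    have hstnn : 0 ≤ 1 - t := by
      rw [sub_nonneg, ht]
      rw [div_le_one (by linarith)]
      linarith
    have h := hφ.1.2 (Set.mem_univ (-b)) (Set.mem_univ b) htnn hstnn (by ring)
    simp only [smul_eq_mul] at h
    have key : t * (-b) + (1 - t) * b = a := by
      have h2b : t * (2 * b) = b - a := by rw [ht]; exact div_mul_cancel₀ _ (by positivity)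
      linarith
    rw [key, hφ.2.2.1 b] at h
    calc φ a ≤ t * φ b + (1 - t) * φ b := h
      _ = φ b := by ring

lemma delta2_step (hφ : IsYoung φ) (hΔ : Delta2 φ) :
    ∃ k C : ℝ, 0 ≤ k ∧ 0 ≤ C ∧ ∀ x ≥ (0:ℝ), φ (2 * x) ≤ k * φ x + C := by
  obtain ⟨k, hk, x₀, hx₀, h⟩ := hΔ
  refine ⟨k, φ (2 * x₀), hk.le, young_nonneg hφ _, fun x hx => ?_⟩
  rcases le_or_gt x₀ x with h1 | h1
  · have := h x h1
    have : φ (2 * x) ≤ k * φ x := this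
    have h2 : (0:ℝ) ≤ φ (2 * x₀) := young_nonneg hφ _
    linarith
  · have h2 : φ (2 * x) ≤ φ (2 * x₀) := young_mono hφ (by linarith) (by linarith)
    have h3 : 0 ≤ k * φ x := mul_nonneg hk.le (young_nonneg hφ _)
    linarith

lemma delta2_pow (hφ : IsYoung φ) (hΔ : Delta2 φ) (m : ℕ) :
    ∃ K C : ℝ, 0 ≤ K ∧ 0 ≤ C ∧ ∀ x ≥ (0:ℝ), φ (2 ^ m * x) ≤ K * φ x + C := by
  induction m with
  | zero => exact ⟨1, 0, zero_le_one, le_refl 0, fun x _ => by norm_num⟩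
  | succ m ih =>
    obtain ⟨K, C, hK, hC, hKC⟩ := ih
    obtain ⟨k, C0, hk, hC0, hkC0⟩ := delta2_step hφ hΔ
    refine ⟨k * K, k * C + C0, mul_nonneg hk hK, by positivity, fun x hx => ?_⟩
    have h1 : (2:ℝ) ^ (m + 1) * x = 2 * (2 ^ m * x) := by ring
    rw [h1]
    have h2 : φ (2 * (2 ^ m * x)) ≤ k * φ (2 ^ m * x) + C0 :=
      hkC0 _ (by positivity)
    have h3 : φ (2 ^ m * x) ≤ K * φ x + C := hKC x hx
    nlinarith [mul_le_mul_of_nonneg_left h3 hk]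

lemma young_abs_arg (hφ : IsYoung φ) (c y : ℝ) (hy : 0 ≤ y) : φ (c * y) = φ (|c| * y) := by
  rcases abs_choice c with h | h
  · rw [h]
  · rw [h]; rw [← hφ.2.2.1 (c * y)]; ring_nf

lemma integrable_young_comp {Ω : Type*} {m0 : MeasurableSpace Ω} {μ : Measure Ω}
    [IsFiniteMeasure μ] (hφ : IsYoung φ) (hΔ : Delta2 φ) {f : Ω → ℝ}
    (hfm : AEStronglyMeasurable f μ) {α : ℝ} (hα : 0 < α)
    (hint : Integrable (fun x => φ (α * |f x|)) μ) (c : ℝ) :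
    Integrable (fun x => φ (c * |f x|)) μ := by
  obtain ⟨m, hm⟩ : ∃ m : ℕ, |c| ≤ 2 ^ m * α := by
    obtain ⟨m, hm⟩ := pow_unbounded_of_one_lt (|c| / α) (by norm_num : (1:ℝ) < 2)
    exact ⟨m, by rw [div_lt_iff₀ hα] at hm; linarith⟩
  obtain ⟨K, C, hK, hC, hKC⟩ := delta2_pow hφ hΔ m
  have hmeas : AEStronglyMeasurable (fun x => φ (c * |f x|)) μ :=
    hφ.2.1.comp_aestronglyMeasurable ((hfm.norm).const_mul c)
  refine Integrable.mono' ((hint.const_mul K).add (integrable_const C)) hmeas ?_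
  filter_upwards with x
  rw [Real.norm_of_nonneg (young_nonneg hφ _)]
  calc φ (c * |f x|) = φ (|c| * |f x|) := young_abs_arg hφ c _ (abs_nonneg _)
    _ ≤ φ (2 ^ m * α * |f x|) :=
        young_mono hφ (by positivity) (mul_le_mul_of_nonneg_right hm (abs_nonneg _))
    _ = φ (2 ^ m * (α * |f x|)) := by ring_nf
    _ ≤ K * φ (α * |f x|) + C := hKC _ (by positivity)

lemma integrable_of_young {Ω : Type*} {m0 : MeasurableSpace Ω} {μ : Measure Ω}
    [IsFiniteMeasure μ] (hφ : IsYoung φ) {f : Ω → ℝ}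
    (hfm : AEStronglyMeasurable f μ) {α : ℝ} (hα : 0 < α)
    (hint : Integrable (fun x => φ (α * |f x|)) μ) : Integrable f μ := by
  obtain ⟨x₁, hx₁⟩ := (Filter.eventually_atTop).1 (hφ.2.2.2.2.eventually_ge_atTop (1/α))
  set x₂ := max x₁ 1 with hx₂
  have key : ∀ y : ℝ, 0 ≤ y → y ≤ x₂ / α + φ (α * y) := by
    intro y hy
    rcases le_or_gt x₂ (α * y) with h | h
    · have hαy : 0 < α * y := lt_of_lt_of_le (by positivity : (0:ℝ) < 1) ((le_max_right _ _).trans h)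
      have h1 := hx₁ (α * y) ((le_max_left _ _).trans h)
      rw [le_div_iff₀ hαy] at h1
      have h2 : y ≤ φ (α * y) := by
        have h3 : 1 / α * (α * y) = y := by field_simp
        linarith [h3 ▸ h1]
      have : 0 ≤ x₂ / α := by positivity
      linarith
    · have : y < x₂ / α := by rw [lt_div_iff₀ hα]; linarith [mul_comm α y]
      have h2 : 0 ≤ φ (α * y) := young_nonneg hφ _
      linarith
  refine Integrable.mono' ((integrable_const (x₂ / α)).add hint) hfm ?_
  filter_upwards with x
  rw [Real.norm_eq_abs]
  exact key _ (abs_nonneg _)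

end Young



section ConvexSub
variable {ψ : ℝ → ℝ}

/-- left-slope-supremum subgradient of a convex function -/
noncomputable def lsub (ψ : ℝ → ℝ) (q : ℝ) : ℝ :=
  sSup {z : ℝ | ∃ y < q, z = (ψ q - ψ y) / (q - y)}

lemma lsub_mem_nonempty (q : ℝ) :
    Set.Nonempty {z : ℝ | ∃ y < q, z = (ψ q - ψ y) / (q - y)} :=
  ⟨(ψ q - ψ (q - 1)) / (q - (q - 1)), ⟨q - 1, by linarith, rfl⟩⟩

lemma lsub_bddAbove (hψ : ConvexOn ℝ Set.univ ψ) (q : ℝ) :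
    ∀ z ∈ {z : ℝ | ∃ y < q, z = (ψ q - ψ y) / (q - y)}, z ≤ ψ (q + 1) - ψ q := by
  rintro z ⟨y, hy, rfl⟩
  have := hψ.slope_mono_adjacent (Set.mem_univ y) (Set.mem_univ (q + 1)) hy (by linarith)
  calc (ψ q - ψ y) / (q - y) ≤ (ψ (q + 1) - ψ q) / (q + 1 - q) := this
    _ = ψ (q + 1) - ψ q := by norm_num

lemma lsub_lb' (hψ : ConvexOn ℝ Set.univ ψ) (q : ℝ) : ψ q - ψ (q - 1) ≤ lsub ψ q := by
  have h : (ψ q - ψ (q - 1)) / (q - (q - 1)) = ψ q - ψ (q - 1) := by norm_num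
  rw [← h]
  exact le_csSup ⟨_, lsub_bddAbove hψ q⟩ ⟨q - 1, by linarith, rfl⟩

lemma lsub_ub (hψ : ConvexOn ℝ Set.univ ψ) (q : ℝ) : lsub ψ q ≤ ψ (q + 1) - ψ q :=
  csSup_le (lsub_mem_nonempty q) (lsub_bddAbove hψ q)

/-- subgradient inequality -/
lemma lsub_subgradient (hψ : ConvexOn ℝ Set.univ ψ) (q x : ℝ) :
    ψ q + lsub ψ q * (x - q) ≤ ψ x := by
  rcases lt_trichotomy x q with h | h | h
  · have hmem : (ψ q - ψ x) / (q - x) ≤ lsub ψ q :=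
      le_csSup ⟨_, lsub_bddAbove hψ q⟩ ⟨x, h, rfl⟩
    have hq : 0 < q - x := by linarith
    have := mul_le_mul_of_nonpos_right hmem (by linarith : x - q ≤ 0)
    have heq : (ψ q - ψ x) / (q - x) * (x - q) = ψ x - ψ q := by
      field_simp
      ring
    linarith [heq ▸ this]
  · subst h; simp
  · have hle : lsub ψ q ≤ (ψ x - ψ q) / (x - q) := by
      refine csSup_le (lsub_mem_nonempty q) ?_
      rintro z ⟨y, hy, rfl⟩
      exact hψ.slope_mono_adjacent (Set.mem_univ y) (Set.mem_univ x) hy h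
    have hq : 0 < x - q := by linarith
    have := mul_le_mul_of_nonneg_right hle hq.le
    have heq : (ψ x - ψ q) / (x - q) * (x - q) = ψ x - ψ q := by field_simp
    linarith [heq ▸ this]

/-- recovery of ψ from its rational affine minorants -/
lemma lsub_recover (hψ : ConvexOn ℝ Set.univ ψ) (hc : Continuous ψ) (x t : ℝ)
    (h : ∀ q : ℚ, ψ q + lsub ψ q * (x - q) ≤ t) : ψ x ≤ t := by
  refine le_of_forall_pos_le_add fun ε hε => ?_
  -- bound for ψ on a compact interval
  obtain ⟨M, hM⟩ := (isCompact_Icc (a := x - 1) (b := x + 2)).exists_bound_of_continuousOn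
    hc.continuousOn
  have hM0 : 0 ≤ M := le_trans (norm_nonneg _) (hM x (by constructor <;> linarith))
  have hs_bound : ∀ q : ℝ, x ≤ q → q ≤ x + 1 → |lsub ψ q| ≤ 2 * M := by
    intro q h1 h2
    have hb1 : ψ q - ψ (q - 1) ≤ lsub ψ q := lsub_lb' hψ q
    have hb2 : lsub ψ q ≤ ψ (q + 1) - ψ q := lsub_ub hψ q
    have n1 : ‖ψ q‖ ≤ M := hM q ⟨by linarith, by linarith⟩
    have n2 : ‖ψ (q - 1)‖ ≤ M := hM _ ⟨by linarith, by linarith⟩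
    have n3 : ‖ψ (q + 1)‖ ≤ M := hM _ ⟨by linarith, by linarith⟩
    rw [Real.norm_eq_abs] at n1 n2 n3
    rw [abs_le] at *
    constructor <;> [linarith [n1.1, n2.2]; linarith [n1.2, n3.1, n1.1, n2.2]]
  -- continuity at x
  obtain ⟨δ, hδ0, hδ⟩ := Metric.continuousAt_iff.1 hc.continuousAt (ε / 2) (by positivity)
  set δ' := min (min δ 1) (ε / (2 * (2 * M + 1))) with hδ'
  have hδ'0 : 0 < δ' := lt_min (lt_min hδ0 one_pos) (by positivity)
  obtain ⟨q, hq1, hq2⟩ := exists_rat_btwn (by linarith : x < x + δ')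
  have hqx : |(q:ℝ) - x| < δ := by
    rw [abs_lt]
    have := min_le_left (min δ 1) (ε / (2 * (2 * M + 1)))
    have := min_le_left δ 1
    constructor <;> [linarith; linarith [hq2.trans_le (by linarith : x + δ' ≤ x + δ)]]
  have hcont : |ψ q - ψ x| < ε / 2 := by
    have := hδ (show dist (q:ℝ) x < δ by rwa [Real.dist_eq])
    rwa [Real.dist_eq] at this
  have hsb : |lsub ψ q| ≤ 2 * M := by
    refine hs_bound q hq1.le ?_
    have h1 : δ' ≤ 1 := le_trans (min_le_left _ _) (min_le_right _ _)
    linarith [hq2.le]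
  have hslope : lsub ψ q * ((q:ℝ) - x) ≤ ε / 2 := by
    have h1 : lsub ψ q * ((q:ℝ) - x) ≤ |lsub ψ q| * |(q:ℝ) - x| := by
      calc lsub ψ q * ((q:ℝ) - x) ≤ |lsub ψ q * ((q:ℝ) - x)| := le_abs_self _
        _ = |lsub ψ q| * |(q:ℝ) - x| := abs_mul _ _
    have h2 : |(q:ℝ) - x| ≤ ε / (2 * (2 * M + 1)) := by
      rw [abs_le]
      have h3 : δ' ≤ ε / (2 * (2 * M + 1)) := min_le_right _ _
      constructor <;> [linarith; linarith [hq2.le]]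
    have h4 : |lsub ψ q| * |(q:ℝ) - x| ≤ (2 * M) * (ε / (2 * (2 * M + 1))) :=
      mul_le_mul hsb h2 (abs_nonneg _) (by linarith)
    have h5 : (2 * M) * (ε / (2 * (2 * M + 1))) ≤ ε / 2 := by
      rw [← mul_div_assoc, div_le_div_iff₀ (by positivity) (by norm_num : (0:ℝ) < 2)]
      nlinarith
    linarith
  have hkey := h q
  -- ψ q ≤ t + lsub ψ q * (q - x)
  have h6 : ψ q ≤ t + lsub ψ q * ((q:ℝ) - x) := by nlinarith [hkey]
  have h7 : ψ x ≤ ψ q + ε / 2 := by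
    rw [abs_lt] at hcont; linarith
  linarith

end ConvexSub

section Jensen
variable {Ω : Type*} {m m0 : MeasurableSpace Ω} {μ : Measure Ω}

/-- conditional Jensen inequality -/
lemma condexp_jensen [IsFiniteMeasure μ] (hm : m ≤ m0) {ψ : ℝ → ℝ}
    (hψ : ConvexOn ℝ Set.univ ψ) (hc : Continuous ψ) {h : Ω → ℝ}
    (hint : Integrable h μ) (hψint : Integrable (fun x => ψ (h x)) μ) :
    ∀ᵐ x ∂μ, ψ ((μ[h|m]) x) ≤ (μ[fun x => ψ (h x)|m]) x := by
  have key : ∀ q : ℚ, ∀ᵐ x ∂μ,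
      ψ q + lsub ψ q * ((μ[h|m]) x - q) ≤ (μ[fun x => ψ (h x)|m]) x := by
    intro q
    have hintaff : Integrable (fun x => ψ q + lsub ψ q * (h x - q)) μ :=
      (integrable_const (ψ (q:ℝ))).add (((hint.sub (integrable_const _)).const_mul _))
    have hmono : (fun x => ψ q + lsub ψ q * (h x - q)) ≤ᵐ[μ] fun x => ψ (h x) :=
      Eventually.of_forall fun x => lsub_subgradient hψ _ _
    have h1 := condExp_mono (m := m) hintaff hψint hmono
    have h2 : μ[fun x => ψ q + lsub ψ q * (h x - q)|m]
        =ᵐ[μ] fun x => ψ q + lsub ψ q * ((μ[h|m]) x - q) := by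
      have e1 := condExp_add (m := m) (μ := μ) (integrable_const (ψ (q:ℝ)))
        ((hint.sub (integrable_const (q:ℝ))).const_mul (lsub ψ q))
      refine e1.trans ?_
      have e2 : μ[fun _ => ψ (q:ℝ)|m] = fun _ => ψ (q:ℝ) := condExp_const hm _
      have e3 : μ[fun x => lsub ψ q * (h x - q)|m]
          =ᵐ[μ] fun x => lsub ψ q * ((μ[h|m]) x - q) := by
        have e4 : (fun x => lsub ψ q * (h x - q)) = lsub ψ q • (h - fun _ => (q:ℝ)) := by
          ext x; simp [Pi.smul_apply, smul_eq_mul]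
        rw [e4]
        refine (condExp_smul (m := m) (lsub ψ q) (h - fun _ => (q:ℝ))).trans ?_
        have e5 := condExp_sub (m := m) (μ := μ) hint (integrable_const (q:ℝ))
        filter_upwards [e5] with x hx
        simp only [Pi.smul_apply, smul_eq_mul, hx, Pi.sub_apply]
        rw [condExp_const hm]
      filter_upwards [e3] with x hx
      simp [e2, hx]
    filter_upwards [h1, h2] with x h1x h2x
    rw [← h2x]
    exact h1x
  rw [← ae_all_iff] at key
  filter_upwards [key] with x hx
  exact lsub_recover hψ hc _ _ hx

end Jensen



section L1
variable {Ω : Type*} {m0 : MeasurableSpace Ω} {μ : Measure Ω} [IsFiniteMeasure μ]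
  {𝒜 : ℕ → MeasurableSpace Ω}

lemma condexp_diff_bound (h𝒜 : ∀ n, 𝒜 n ≤ m0) {g g' : Ω → ℝ}
    (hg : Integrable g μ) (hg' : Integrable g' μ) (n : ℕ) :
    eLpNorm (μ[g|𝒜 n] - g) 1 μ
      ≤ 2 * eLpNorm (g - g') 1 μ + eLpNorm (μ[g'|𝒜 n] - g') 1 μ := by
  have hdec : μ[g|𝒜 n] - g =ᵐ[μ] μ[g - g'|𝒜 n] + ((μ[g'|𝒜 n] - g') + (g' - g)) := by
    filter_upwards [condExp_sub (m := 𝒜 n) hg hg'] with x hx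
    simp only [Pi.add_apply, Pi.sub_apply] at *
    rw [hx]; ring
  have m1 : AEStronglyMeasurable (μ[g - g'|𝒜 n]) μ :=
    (stronglyMeasurable_condExp.mono (h𝒜 n)).aestronglyMeasurable
  have m2 : AEStronglyMeasurable (μ[g'|𝒜 n] - g') μ :=
    (integrable_condExp.sub hg').aestronglyMeasurable
  have m3 : AEStronglyMeasurable (g' - g) μ := (hg'.sub hg).aestronglyMeasurable
  have hsymm : eLpNorm (g' - g) 1 μ = eLpNorm (g - g') 1 μ := by
    rw [show g' - g = -(g - g') from (neg_sub g g').symm, eLpNorm_neg]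
  calc eLpNorm (μ[g|𝒜 n] - g) 1 μ
      = eLpNorm (μ[g - g'|𝒜 n] + ((μ[g'|𝒜 n] - g') + (g' - g))) 1 μ := eLpNorm_congr_ae hdec
    _ ≤ eLpNorm (μ[g - g'|𝒜 n]) 1 μ + eLpNorm ((μ[g'|𝒜 n] - g') + (g' - g)) 1 μ :=
        eLpNorm_add_le m1 (m2.add m3) le_rfl
    _ ≤ eLpNorm (μ[g - g'|𝒜 n]) 1 μ + (eLpNorm (μ[g'|𝒜 n] - g') 1 μ + eLpNorm (g' - g) 1 μ) :=
        add_le_add_right (eLpNorm_add_le m2 m3 le_rfl) _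
    _ ≤ eLpNorm (g - g') 1 μ + (eLpNorm (μ[g'|𝒜 n] - g') 1 μ + eLpNorm (g - g') 1 μ) := by
        rw [hsymm]
        exact add_le_add_left (eLpNorm_one_condExp_le_eLpNorm _) _
    _ = 2 * eLpNorm (g - g') 1 μ + eLpNorm (μ[g'|𝒜 n] - g') 1 μ := by ring

lemma l1_indicator (h𝒜 : ∀ n, 𝒜 n ≤ m0) {𝔇 : MeasurableSpace Ω} (h𝔇 : 𝔇 ≤ m0)
    {D : Set Ω} (hD : MeasurableSet[𝔇] D) {As : ℕ → Set Ω}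
    (hAs : ∀ n, MeasurableSet[𝒜 n] (As n))
    (hTend : Tendsto (fun n => μ (symmDiff (As n) D)) atTop (𝓝 0)) :
    Tendsto (fun n =>
      eLpNorm (μ[D.indicator (fun _ => (1:ℝ))|𝒜 n] - D.indicator (fun _ => (1:ℝ))) 1 μ)
      atTop (𝓝 0) := by
  set iD := D.indicator (fun _ => (1:ℝ)) with hiDdef
  have hDm : MeasurableSet[m0] D := h𝔇 _ hD
  have hiD : Integrable iD μ := (integrable_const (1:ℝ)).indicator hDm
  have key : ∀ n, eLpNorm (μ[iD|𝒜 n] - iD) 1 μ ≤ 2 * μ (symmDiff (As n) D) := by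
    intro n
    set iA := (As n).indicator (fun _ => (1:ℝ)) with hiAdef
    have hAm : MeasurableSet[m0] (As n) := h𝒜 n _ (hAs n)
    have hiA : Integrable iA μ := (integrable_const (1:ℝ)).indicator hAm
    have hnorm : eLpNorm (iD - iA) 1 μ = μ (symmDiff (As n) D) := by
      rw [eLpNorm_one_eq_lintegral_enorm]
      have hpt : ∀ x, ‖(iD - iA) x‖ₑ
          = (symmDiff (As n) D).indicator (fun _ => (1:ℝ≥0∞)) x := by
        intro x
        by_cases h1 : x ∈ As n <;> by_cases h2 : x ∈ D <;>
          simp [hiDdef, hiAdef, Set.indicator_apply, h1, h2, symmDiff_def, Set.mem_union]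
      simp_rw [hpt]
      rw [lintegral_indicator (show MeasurableSet[m0] (symmDiff (As n) D) from hAm.symmDiff hDm)]
      simp
    have hcond : μ[iA|𝒜 n] = iA :=
      condExp_of_stronglyMeasurable (h𝒜 n) (stronglyMeasurable_const.indicator (hAs n)) hiA
    have hb := condexp_diff_bound h𝒜 hiD hiA n
    rw [hcond, sub_self, eLpNorm_zero, add_zero, hnorm] at hb
    exact hb
  have h2 : Tendsto (fun n => 2 * μ (symmDiff (As n) D)) atTop (𝓝 0) := by
    have := ENNReal.Tendsto.const_mul (a := 2) hTend (Or.inr ENNReal.ofNat_ne_top)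
    simpa using this
  exact tendsto_of_tendsto_of_tendsto_of_le_of_le tendsto_const_nhds h2
    (fun n => zero_le) key

lemma integrable_simpleFunc {𝔇 : MeasurableSpace Ω} (h𝔇 : 𝔇 ≤ m0)
    (s : @SimpleFunc Ω 𝔇 ℝ) : Integrable ⇑s μ := by
  obtain ⟨C, hC⟩ := s.exists_forall_norm_le
  exact Integrable.mono' (integrable_const C)
    ((s.stronglyMeasurable.mono h𝔇).aestronglyMeasurable) (Filter.Eventually.of_forall hC)

lemma l1_simple (h𝒜 : ∀ n, 𝒜 n ≤ m0) {𝔇 : MeasurableSpace Ω} (h𝔇 : 𝔇 ≤ m0)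
    (hconv : ∀ D : Set Ω, MeasurableSet[𝔇] D → ∃ As : ℕ → Set Ω,
      (∀ n, MeasurableSet[𝒜 n] (As n)) ∧
      Tendsto (fun n => μ (symmDiff (As n) D)) atTop (𝓝 0))
    (s : @SimpleFunc Ω 𝔇 ℝ) :
    Tendsto (fun n => eLpNorm (μ[⇑s|𝒜 n] - ⇑s) 1 μ) atTop (𝓝 0) := by
  induction s using SimpleFunc.induction with
  | @const c D hD =>
    obtain ⟨As, hAs, hTend⟩ := hconv D hD
    have hind := l1_indicator h𝒜 h𝔇 hD hAs hTend
    set iD := D.indicator (fun _ => (1:ℝ)) with hiDdef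
    have hDm : MeasurableSet[m0] D := h𝔇 _ hD
    have hiD : Integrable iD μ := (integrable_const (1:ℝ)).indicator hDm
    have hcoe : ⇑(SimpleFunc.piecewise D hD (SimpleFunc.const _ c) (SimpleFunc.const _ (0:ℝ)))
        = c • iD := by
      ext x
      by_cases hx : x ∈ D <;>
        simp [SimpleFunc.coe_piecewise, Set.piecewise, hx, hiDdef, Set.indicator_apply]
    rw [hcoe]
    have hsm : ∀ n, μ[c • iD|𝒜 n] - c • iD =ᵐ[μ] c • (μ[iD|𝒜 n] - iD) := by
      intro n
      filter_upwards [condExp_smul (m := 𝒜 n) (μ := μ) c iD] with x hx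
      simp only [Pi.sub_apply, Pi.smul_apply, smul_eq_mul] at *
      rw [hx]; ring
    have heq : ∀ n, eLpNorm (μ[c • iD|𝒜 n] - c • iD) 1 μ
        = (‖c‖₊ : ℝ≥0∞) * eLpNorm (μ[iD|𝒜 n] - iD) 1 μ := by
      intro n
      rw [eLpNorm_congr_ae (hsm n), eLpNorm_const_smul, enorm_eq_nnnorm]
    simp_rw [heq]
    have := ENNReal.Tendsto.const_mul (a := (‖c‖₊ : ℝ≥0∞)) hind (Or.inr ENNReal.coe_ne_top)
    simpa using this
  | @add f g hdisj hf hg =>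
    have hfi : Integrable ⇑f μ := integrable_simpleFunc h𝔇 f
    have hgi : Integrable ⇑g μ := integrable_simpleFunc h𝔇 g
    have hdec : ∀ n, μ[⇑(f + g)|𝒜 n] - ⇑(f + g)
        =ᵐ[μ] (μ[⇑f|𝒜 n] - ⇑f) + (μ[⇑g|𝒜 n] - ⇑g) := by
      intro n
      have hco : ⇑(f + g) = ⇑f + ⇑g := SimpleFunc.coe_add f g
      rw [hco]
      filter_upwards [condExp_add (m := 𝒜 n) hfi hgi] with x hx
      simp only [Pi.add_apply, Pi.sub_apply] at *
      rw [hx]; ring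
    have hb : ∀ n, eLpNorm (μ[⇑(f + g)|𝒜 n] - ⇑(f + g)) 1 μ
        ≤ eLpNorm (μ[⇑f|𝒜 n] - ⇑f) 1 μ + eLpNorm (μ[⇑g|𝒜 n] - ⇑g) 1 μ := by
      intro n
      rw [eLpNorm_congr_ae (hdec n)]
      exact eLpNorm_add_le (integrable_condExp.sub hfi).aestronglyMeasurable
        (integrable_condExp.sub hgi).aestronglyMeasurable le_rfl
    have hsum := hf.add hg
    rw [add_zero] at hsum
    exact tendsto_of_tendsto_of_tendsto_of_le_of_le tendsto_const_nhds hsum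
      (fun n => zero_le) hb

lemma l1_condexp_tendsto (h𝒜 : ∀ n, 𝒜 n ≤ m0)
    {𝔇 : MeasurableSpace Ω} (h𝔇 : 𝔇 ≤ m0)
    (hconv : ∀ D : Set Ω, MeasurableSet[𝔇] D → ∃ As : ℕ → Set Ω,
      (∀ n, MeasurableSet[𝒜 n] (As n)) ∧
      Tendsto (fun n => μ (symmDiff (As n) D)) atTop (𝓝 0))
    {f : Ω → ℝ} (hf : StronglyMeasurable[𝔇] f) (hfi : Integrable f μ) :
    Tendsto (fun n => eLpNorm (μ[f|𝒜 n] - f) 1 μ) atTop (𝓝 0) := by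
  rw [ENNReal.tendsto_nhds_zero]
  intro ε hε
  rcases eq_or_ne ε ∞ with rfl | htop
  · exact Filter.Eventually.of_forall fun n => le_top
  have hε3 : (0:ℝ≥0∞) < ε / 3 := ENNReal.div_pos hε.ne' (by norm_num)
  have hfD : MemLp f 1 (μ.trim h𝔇) := by
    refine ⟨hf.aestronglyMeasurable, ?_⟩
    rw [eLpNorm_trim h𝔇 hf]
    exact (memLp_one_iff_integrable.2 hfi).2
  obtain ⟨s, hs, _⟩ := hfD.exists_simpleFunc_eLpNorm_sub_lt ENNReal.one_ne_top hε3.ne'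
  have hsdist : eLpNorm (f - ⇑s) 1 μ < ε / 3 := by
    rwa [eLpNorm_trim h𝔇 (hf.sub s.stronglyMeasurable)] at hs
  have hsi : Integrable ⇑s μ := integrable_simpleFunc h𝔇 s
  have hPs := l1_simple h𝒜 h𝔇 hconv s
  rw [ENNReal.tendsto_nhds_zero] at hPs
  filter_upwards [hPs (ε / 3) hε3] with n hn
  calc eLpNorm (μ[f|𝒜 n] - f) 1 μ
      ≤ 2 * eLpNorm (f - ⇑s) 1 μ + eLpNorm (μ[⇑s|𝒜 n] - ⇑s) 1 μ :=
        condexp_diff_bound h𝒜 hfi hsi n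
    _ ≤ 2 * (ε / 3) + ε / 3 := add_le_add (mul_le_mul_right hsdist.le 2) hn
    _ = ε := by rw [two_mul]; exact ENNReal.add_thirds ε

end L1

section Main
variable {Ω : Type*} {m0 : MeasurableSpace Ω} {μ : Measure Ω} [IsFiniteMeasure μ] {φ : ℝ → ℝ}

lemma young_eq_abs (hφ : IsYoung φ) (t : ℝ) : φ t = φ |t| := by
  rcases abs_choice t with h | h
  · rw [h]
  · rw [h, hφ.2.2.1]

lemma young_scale_convex (hφ : IsYoung φ) (d : ℝ) :
    ConvexOn ℝ Set.univ (fun y => φ (d * y)) := by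
  refine ⟨convex_univ, fun x _ y _ a b ha hb hab => ?_⟩
  have h := hφ.1.2 (Set.mem_univ (d * x)) (Set.mem_univ (d * y)) ha hb hab
  simp only [smul_eq_mul] at *
  have he : d * (a * x + b * y) = a * (d * x) + b * (d * y) := by ring
  rw [he]
  exact h

lemma young_split (hφ : IsYoung φ) {c : ℝ} (hc : 0 < c) (a b : ℝ) :
    φ (c * |a - b|) ≤ φ (2 * c * |a|) + φ (2 * c * |b|) := by
  have habs : |a - b| ≤ |a| + |b| := by
    rw [sub_eq_add_neg]
    exact (abs_add_le a (-b)).trans (by rw [abs_neg])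
  have h1 : φ (c * |a - b|) ≤ φ (c * (|a| + |b|)) :=
    young_mono hφ (by positivity) (mul_le_mul_of_nonneg_left habs hc.le)
  have h2 : c * (|a| + |b|) = (1/2 : ℝ) * (2 * c * |a|) + (1/2) * (2 * c * |b|) := by ring
  have h3 := hφ.1.2 (Set.mem_univ (2 * c * |a|)) (Set.mem_univ (2 * c * |b|))
    (by norm_num : (0:ℝ) ≤ 1/2) (by norm_num : (0:ℝ) ≤ 1/2) (by norm_num)
  simp only [smul_eq_mul] at h3
  rw [h2] at h1
  nlinarith [young_nonneg hφ (2 * c * |a|), young_nonneg hφ (2 * c * |b|), h1.trans h3]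

lemma unifIntegrable_of_dominated {F G : ℕ → Ω → ℝ}
    (hF : ∀ n, AEStronglyMeasurable (F n) μ)
    (hFnn : ∀ n, ∀ᵐ x ∂μ, 0 ≤ F n x) (hdom : ∀ n, ∀ᵐ x ∂μ, F n x ≤ G n x)
    (hG : UnifIntegrable G 1 μ) : UnifIntegrable F 1 μ := by
  intro ε hε
  obtain ⟨δ, hδ, h⟩ := hG hε
  refine ⟨δ, hδ, fun n s hs hμs => ?_⟩
  refine le_trans (eLpNorm_mono_ae ?_) (h n s hs hμs)
  filter_upwards [hFnn n, hdom n] with x h0 h1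
  by_cases hx : x ∈ s
  · rw [Set.indicator_of_mem hx, Set.indicator_of_mem hx, Real.norm_eq_abs, Real.norm_eq_abs,
      abs_of_nonneg h0]
    exact h1.trans (le_abs_self _)
  · rw [Set.indicator_of_notMem hx, Set.indicator_of_notMem hx]

lemma orlicz_tendsto (hφ : IsYoung φ) (hΔ₂ : Delta2 φ)
    {𝒜 : ℕ → MeasurableSpace Ω} (h𝒜 : ∀ n, 𝒜 n ≤ m0)
    {f : Ω → ℝ} (hfi : Integrable f μ)
    (hL1 : Tendsto (fun n => eLpNorm (μ[f|𝒜 n] - f) 1 μ) atTop (𝓝 0))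
    {α : ℝ} (hα : 0 < α) (hintα : Integrable (fun x => φ (α * |f x|)) μ)
    {c : ℝ} (hc : 0 < c) :
    Tendsto (fun n => eLpNorm (fun x => φ (c * |(μ[f|𝒜 n]) x - f x|)) 1 μ) atTop (𝓝 0) := by
  set F := fun n => fun x => φ (c * |(μ[f|𝒜 n]) x - f x|) with hFdef
  have hgm : ∀ n, AEStronglyMeasurable (μ[f|𝒜 n] - f) μ := fun n =>
    (integrable_condExp.sub hfi).aestronglyMeasurable
  have hFm : ∀ n, AEStronglyMeasurable (F n) μ := fun n =>
    hφ.2.1.comp_aestronglyMeasurable (((hgm n).norm).const_mul c)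
  set ψ := fun y : ℝ => φ (2 * c * y) with hψdef
  have hψconv : ConvexOn ℝ Set.univ ψ := young_scale_convex hφ _
  have hψcont : Continuous ψ := hφ.2.1.comp (continuous_const.mul continuous_id)
  have hψf_eq : ∀ t : ℝ, ψ t = φ (2 * c * |t|) := by
    intro t
    show φ (2 * c * t) = φ (2 * c * |t|)
    rw [young_eq_abs hφ (2 * c * t), abs_mul, abs_of_nonneg (by positivity : (0:ℝ) ≤ 2*c)]
  have hintψ : Integrable (fun x => ψ (f x)) μ := by
    have h1 := integrable_young_comp hφ hΔ₂ hfi.aestronglyMeasurable hα hintα (2 * c)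
    exact h1.congr (Filter.Eventually.of_forall fun x => (hψf_eq (f x)).symm)
  have hJen : ∀ n, ∀ᵐ x ∂μ, ψ ((μ[f|𝒜 n]) x) ≤ (μ[fun x => ψ (f x)|𝒜 n]) x := fun n =>
    condexp_jensen (h𝒜 n) hψconv hψcont hfi hintψ
  set G := fun n => fun x => (μ[fun x => ψ (f x)|𝒜 n]) x + ψ (f x) with hGdef
  have hdom : ∀ n, ∀ᵐ x ∂μ, F n x ≤ G n x := by
    intro n
    have hψnn : (0 : Ω → ℝ) ≤ᵐ[μ] fun x => ψ (f x) :=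
      Filter.Eventually.of_forall fun x => by
        rw [Pi.zero_apply]
        show (0:ℝ) ≤ ψ (f x)
        rw [hψf_eq]; exact young_nonneg hφ _
    have hnn := condExp_nonneg (m := 𝒜 n) (μ := μ) hψnn
    filter_upwards [hJen n, hnn] with x hx hx0
    have h1 : F n x ≤ φ (2*c*|(μ[f|𝒜 n]) x|) + φ (2*c*|f x|) := young_split hφ hc _ _
    have h2 : φ (2*c*|(μ[f|𝒜 n]) x|) = ψ ((μ[f|𝒜 n]) x) := (hψf_eq _).symm
    have h3 : φ (2*c*|f x|) = ψ (f x) := (hψf_eq _).symm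
    have hx0' : (0:ℝ) ≤ (μ[fun x => ψ (f x)|𝒜 n]) x := hx0
    show F n x ≤ (μ[fun x => ψ (f x)|𝒜 n]) x + ψ (f x)
    rw [h2, h3] at h1
    linarith
  have hGui : UnifIntegrable G 1 μ := by
    have h1 : UnifIntegrable (fun n => μ[fun x => ψ (f x)|𝒜 n]) 1 μ :=
      (hintψ.uniformIntegrable_condExp h𝒜).2.1
    have h2 : UnifIntegrable (fun _ : ℕ => fun x => ψ (f x)) 1 μ :=
      unifIntegrable_const le_rfl ENNReal.one_ne_top (memLp_one_iff_integrable.2 hintψ)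
    have h3 := h1.add h2 le_rfl
      (fun n => (stronglyMeasurable_condExp.mono (h𝒜 n)).aestronglyMeasurable)
      (fun _ => hintψ.aestronglyMeasurable)
    exact h3
  have hFui : UnifIntegrable F 1 μ := unifIntegrable_of_dominated hFm
    (fun n => Filter.Eventually.of_forall fun x => young_nonneg hφ _) hdom hGui
  have hTIM : TendstoInMeasure μ (fun n => μ[f|𝒜 n] - f) atTop 0 := by
    refine tendstoInMeasure_of_tendsto_eLpNorm one_ne_zero hgm aestronglyMeasurable_zero ?_
    simpa using hL1
  have hFTIM : TendstoInMeasure μ F atTop 0 := by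
    refine tendstoInMeasure_of_ne_top fun ε hε hεtop => ?_
    obtain ⟨δ, hδ0, hδ⟩ := Metric.continuousAt_iff.1 (hφ.2.1.continuousAt (x := (0:ℝ)))
      ε.toReal (ENNReal.toReal_pos hε.ne' hεtop)
    have key : ∀ n, μ {x | ε ≤ edist (F n x) ((0 : Ω → ℝ) x)}
        ≤ μ {x | ENNReal.ofReal (δ/c) ≤ edist ((μ[f|𝒜 n] - f) x) ((0 : Ω → ℝ) x)} := by
      intro n
      refine measure_mono fun x hx => ?_
      have hx' : ε ≤ ENNReal.ofReal |F n x| := by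
        have := hx
        simp only [Set.mem_setOf_eq, Pi.zero_apply, edist_dist, Real.dist_eq, sub_zero] at this
        exact this
      show ENNReal.ofReal (δ/c) ≤ edist ((μ[f|𝒜 n]) x - f x) 0
      rw [edist_dist, Real.dist_eq, sub_zero]
      by_contra hcon
      push_neg at hcon
      have hcon' : |(μ[f|𝒜 n]) x - f x| < δ/c :=
        (ENNReal.ofReal_lt_ofReal_iff_of_nonneg (abs_nonneg _)).1 hcon
      have h2 := hδ (show dist (c * |(μ[f|𝒜 n]) x - f x|) (0:ℝ) < δ by
        rw [Real.dist_eq, sub_zero, abs_of_nonneg (by positivity : (0:ℝ) ≤ c * |(μ[f|𝒜 n]) x - f x|)]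
        calc c * |(μ[f|𝒜 n]) x - f x| < c * (δ/c) := (mul_lt_mul_iff_right₀ hc).2 hcon'
          _ = δ := by field_simp)
      rw [young_zero hφ, Real.dist_eq, sub_zero] at h2
      have h3 : |F n x| < ε.toReal := h2
      have h4 := (ENNReal.ofReal_lt_iff_lt_toReal (abs_nonneg _) hεtop).2 h3
      exact absurd hx' (not_le.2 h4)
    exact tendsto_of_tendsto_of_tendsto_of_le_of_le tendsto_const_nhds
      (hTIM (ENNReal.ofReal (δ/c)) (ENNReal.ofReal_pos.2 (by positivity))) (fun n => zero_le) key
  have hfin := tendsto_Lp_finite_of_tendstoInMeasure le_rfl ENNReal.one_ne_top hFm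
    MemLp.zero hFui hFTIM
  simpa using hfin

end Main

theorem stmt_7 {Ω : Type*} {m0 : MeasurableSpace Ω} (μ : Measure Ω) [IsFiniteMeasure μ]
    (φ : ℝ → ℝ) (hφ : IsYoung φ) (hΔ₂ : Delta2 φ)
    (𝒜 : ℕ → MeasurableSpace Ω) (h𝒜 : ∀ n, 𝒜 n ≤ m0)
    (𝔇 : MeasurableSpace Ω) (h𝔇 : 𝔇 ≤ m0)
    (hconv : ∀ D : Set Ω, MeasurableSet[𝔇] D → ∃ As : ℕ → Set Ω,
      (∀ n, MeasurableSet[𝒜 n] (As n)) ∧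
      Tendsto (fun n => μ (symmDiff (As n) D)) atTop (𝓝 0))
    (f : Ω → ℝ) (hf : StronglyMeasurable[𝔇] f)
    (hfφ : ∃ α > 0, Integrable (fun x => φ (α * |f x|)) μ) :
    Tendsto (fun n => luxNorm μ φ (fun x => (μ[f | 𝒜 n]) x - f x)) atTop (𝓝 0) := by
  obtain ⟨α, hα, hintα⟩ := hfφ
  have hfm0 : @AEStronglyMeasurable Ω ℝ _ m0 m0 f μ := (hf.mono h𝔇).aestronglyMeasurable
  have hfi : Integrable f μ := integrable_of_young hφ hfm0 hα hintα
  have hL1 := l1_condexp_tendsto h𝒜 h𝔇 hconv hf hfi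
  rw [Metric.tendsto_atTop]
  intro ε hε
  have hc : (0:ℝ) < 2/ε := by positivity
  have horlicz := orlicz_tendsto hφ hΔ₂ h𝒜 hfi hL1 hα hintα hc
  rw [ENNReal.tendsto_nhds_zero] at horlicz
  obtain ⟨N, hN⟩ := Filter.eventually_atTop.1 (horlicz 1 one_pos)
  refine ⟨N, fun n hn => ?_⟩
  have hle := hN n hn
  set g := fun x => (μ[f|𝒜 n]) x - f x with hgdef
  have hint_le : ∫ x, φ (|g x| / (ε/2)) ∂μ ≤ 1 := by
    have heq : (fun x => φ (|g x| / (ε/2))) = fun x => φ ((2/ε) * |g x|) := by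
      funext x
      congr 1
      field_simp
    rw [heq]
    have hmeas : @AEStronglyMeasurable Ω ℝ _ m0 m0 (fun x => φ ((2/ε) * |g x|)) μ :=
      hφ.2.1.comp_aestronglyMeasurable
        (((integrable_condExp.sub hfi).aestronglyMeasurable.norm).const_mul _)
    rw [integral_eq_lintegral_of_nonneg_ae
      (Filter.Eventually.of_forall fun x => young_nonneg hφ _) hmeas]
    have h2 : ∫⁻ x, ENNReal.ofReal (φ ((2/ε) * |g x|)) ∂μ
        = eLpNorm (fun x => φ ((2/ε) * |g x|)) 1 μ := by
      rw [eLpNorm_one_eq_lintegral_enorm]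
      congr 1
      funext x
      rw [← Real.enorm_eq_ofReal (young_nonneg hφ _)]
    rw [h2]
    have hle' : eLpNorm (fun x => φ ((2/ε) * |g x|)) 1 μ ≤ 1 := hle
    calc (eLpNorm (fun x => φ ((2/ε) * |g x|)) 1 μ).toReal
        ≤ (1 : ℝ≥0∞).toReal := ENNReal.toReal_mono (by norm_num) hle'
      _ = 1 := by norm_num
  have hmem : (ε/2) ∈ {k : ℝ | 0 < k ∧ ∫ x, φ (|g x| / k) ∂μ ≤ 1} := ⟨by positivity, hint_le⟩
  have hbdd : BddBelow {k : ℝ | 0 < k ∧ ∫ x, φ (|g x| / k) ∂μ ≤ 1} :=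
    ⟨0, fun k hk => hk.1.le⟩
  have h1 : luxNorm μ φ g ≤ ε/2 := csInf_le hbdd hmem
  have h2 : 0 ≤ luxNorm μ φ g := Real.sInf_nonneg fun k hk => hk.1.le
  rw [Real.dist_eq, sub_zero, abs_of_nonneg h2]
  linarith
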